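/- arXiv:1403.7851 — 5 statements merged into one kernel-verified Lean document; each statement's English description precedes it below -/
import Mathlib

section
/- Let H be an m × N matrix with entries in {0,1} and for each row j let N(j) denote its support. If a 0-1 vector x ∈ {0,1}^N lies in the fundamental polytope Q(H), then x is a codeword of H, i.e., ∑_{i∈N(j)} x_i is even for every row j. In other words, the integral points of Q(H) are exactly the codewords of H (the ML-certificate property of the fundamental polytope). -/
/-- The support `N(j)` of row `j` of a 0-1 parity-check matrix. -/
def rowSupport {m N : ℕ} (H : Matrix (Fin m) (Fin N) Bool) (j : Fin m) : Finset (Fin N) :=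
  Finset.univ.filter (fun i => H j i = true)

/-- The fundamental polytope `Q(H)`: all `x ∈ [0,1]^N` such that for every row `j`
and every odd-size subset `V ⊆ N(j)`,
`∑_{i∈V} x_i − ∑_{i∈N(j)∖V} x_i ≤ |V| − 1`. -/
def fundamentalPolytope {m N : ℕ} (H : Matrix (Fin m) (Fin N) Bool) : Set (Fin N → ℝ) :=
  {x | (∀ i, 0 ≤ x i ∧ x i ≤ 1) ∧
    ∀ j : Fin m, ∀ V ⊆ rowSupport H j, Odd V.card →
      (∑ i ∈ V, x i) - (∑ i ∈ rowSupport H j \ V, x i) ≤ (V.card : ℝ) - 1}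

/-- `c ∈ {0,1}^N` is a codeword of `H`: every row's support contains an even
number of ones of `c`, i.e. `∑_{i∈N(j)} c_i` is even. -/
def isCodeword {m N : ℕ} (H : Matrix (Fin m) (Fin N) Bool) (c : Fin N → Bool) : Prop :=
  ∀ j : Fin m, Even ((rowSupport H j).filter (fun i => c i = true)).card

/-- The real embedding of a binary vector. -/
def toReal {N : ℕ} (c : Fin N → Bool) : Fin N → ℝ := fun i => if c i then 1 else 0

/-- Any 0-1 vector lying in the fundamental polytope `Q(H)` is a
codeword of `H`: the integral points of `Q(H)` are exactly the codewords
(ML-certificate property). -/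
theorem integral_point_of_fundamentalPolytope_isCodeword {m N : ℕ}
    (H : Matrix (Fin m) (Fin N) Bool) (c : Fin N → Bool)
    (hc : toReal c ∈ fundamentalPolytope H) : isCodeword H c := by
  intro j
  by_contra hodd
  rw [Nat.not_even_iff_odd] at hodd
  set V := (rowSupport H j).filter (fun i => c i = true) with hV
  have hsub : V ⊆ rowSupport H j := Finset.filter_subset _ _
  have hineq := hc.2 j V hsub hodd
  have h1 : (∑ i ∈ V, toReal c i) = (V.card : ℝ) := by
    rw [Finset.sum_congr rfl (fun i hi => ?_), Finset.sum_const, nsmul_eq_mul, mul_one]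
    simp only [toReal, if_pos (Finset.mem_filter.mp hi).2]
  have h2 : (∑ i ∈ rowSupport H j \ V, toReal c i) = 0 := by
    apply Finset.sum_eq_zero
    intro i hi
    have := (Finset.mem_sdiff.mp hi)
    have hc0 : c i ≠ true := fun h => this.2 (Finset.mem_filter.mpr ⟨this.1, h⟩)
    simp [toReal, hc0]
  rw [h1, h2] at hineq
  linarith
end

section
/- For every integer d ≥ 1, the set of vectors x ∈ [0,1]^d satisfying, for every subset V ⊆ {1,…,d} of odd cardinality, the inequality ∑_{i∈V} x_i − ∑_{i∉V} x_i ≤ |V| − 1, is equal to the parity polytope of degree d, i.e., the convex hull in ℝ^d of the vectors in {0,1}^d having an even number of ones. (The fundamental polytope of a single parity check is exactly the convex hull of the binary vectors satisfying that check.) -/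
/-- The parity polytope of degree `d`: the convex hull in `ℝ^d` of the binary
vectors with an even number of ones. -/
def parityPolytope (d : ℕ) : Set (Fin d → ℝ) :=
  convexHull ℝ {x : Fin d → ℝ | ∃ c : Fin d → Bool,
    Even (Finset.univ.filter (fun i => c i = true)).card ∧
    x = fun i => if c i then 1 else 0}

open Finset

namespace FeldmanAux

variable {d : ℕ}

/-- Feasible set of Feldman's constraints. -/
def feas (d : ℕ) : Set (Fin d → ℝ) :=
  {x : Fin d → ℝ | (∀ i, 0 ≤ x i ∧ x i ≤ 1) ∧
      ∀ V : Finset (Fin d), Odd V.card →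
        (∑ i ∈ V, x i) - (∑ i ∈ Vᶜ, x i) ≤ (V.card : ℝ) - 1}

/-- The slack functional. -/
noncomputable def g (x : Fin d → ℝ) (V : Finset (Fin d)) : ℝ :=
  ∑ i ∈ V, (1 - x i) + ∑ i ∈ Vᶜ, x i

lemma g_eq_card (x : Fin d → ℝ) (V : Finset (Fin d)) :
    g x V = (V.card : ℝ) - ∑ i ∈ V, x i + ∑ i ∈ Vᶜ, x i := by
  unfold g
  rw [Finset.sum_sub_distrib]
  simp

lemma g_eq_sum (x : Fin d → ℝ) (V : Finset (Fin d)) :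
    g x V = ∑ k, (if k ∈ V then 1 - x k else x k) := by
  rw [← Finset.sum_add_sum_compl V (fun k => if k ∈ V then 1 - x k else x k)]
  unfold g
  congr 1
  · exact Finset.sum_congr rfl fun k hk => by simp [hk]
  · exact Finset.sum_congr rfl fun k hk => by simp [Finset.mem_compl.1 hk]

lemma mem_feas_iff (x : Fin d → ℝ) :
    x ∈ feas d ↔ (∀ i, 0 ≤ x i ∧ x i ≤ 1) ∧
      ∀ V : Finset (Fin d), Odd V.card → 1 ≤ g x V := by
  unfold feas
  constructor
  · rintro ⟨hb, hc⟩
    refine ⟨hb, fun V hV => ?_⟩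
    have := hc V hV
    rw [g_eq_card]; linarith
  · rintro ⟨hb, hc⟩
    refine ⟨hb, fun V hV => ?_⟩
    have := hc V hV
    rw [g_eq_card] at this; linarith

lemma term_nonneg {x : Fin d → ℝ} (hb : ∀ i, 0 ≤ x i ∧ x i ≤ 1)
    (V : Finset (Fin d)) (k : Fin d) : 0 ≤ (if k ∈ V then 1 - x k else x k) := by
  by_cases hk : k ∈ V <;> simp [hk]
  · linarith [(hb k).2]
  · exact (hb k).1

/-- At a tight constraint (in presence of a fractional coordinate), integral
coordinates lie on the forced side. -/
lemma tight_side {x : Fin d → ℝ} (hb : ∀ i, 0 ≤ x i ∧ x i ≤ 1)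
    {V : Finset (Fin d)} (hV : g x V = 1)
    {m : Fin d} (hm : 0 < x m ∧ x m < 1) (k : Fin d) :
    (x k = 1 → k ∈ V) ∧ (x k = 0 → k ∉ V) := by
  have key : (if k ∈ V then 1 - x k else x k) = 1 → False := by
    intro h1
    have hmk : m ≠ k := by
      intro he
      rw [he] at hm
      by_cases hkV : k ∈ V
      · rw [if_pos hkV] at h1; linarith [hm.1, hm.2]
      · rw [if_neg hkV] at h1; linarith [hm.1, hm.2]
    have hmpos : 0 < (if m ∈ V then 1 - x m else x m) := by
      by_cases hmV : m ∈ V <;> simp [hmV] <;> linarith [hm.1, hm.2]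
    have hsub : ({m, k} : Finset (Fin d)) ⊆ Finset.univ := Finset.subset_univ _
    have hpair : ∑ j ∈ ({m, k} : Finset (Fin d)), (if j ∈ V then 1 - x j else x j)
        = (if m ∈ V then 1 - x m else x m) + (if k ∈ V then 1 - x k else x k) :=
      Finset.sum_pair hmk
    have hle : ∑ j ∈ ({m, k} : Finset (Fin d)), (if j ∈ V then 1 - x j else x j)
        ≤ ∑ j, (if j ∈ V then 1 - x j else x j) :=
      Finset.sum_le_sum_of_subset_of_nonneg hsub fun j _ _ => term_nonneg hb V j
    rw [← g_eq_sum, hV] at hle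
    rw [hpair, h1] at hle
    linarith
  constructor
  · intro h1
    by_contra hkV
    exact key (by simp [hkV, h1])
  · intro h0 hkV
    exact key (by simp [hkV, h0])

/-- A tight constraint forces a second fractional coordinate. -/
lemma tight_second_frac {x : Fin d → ℝ} (hb : ∀ i, 0 ≤ x i ∧ x i ≤ 1)
    {V : Finset (Fin d)} (hV : g x V = 1)
    {i : Fin d} (hi : 0 < x i ∧ x i < 1) :
    ∃ j, j ≠ i ∧ 0 < x j ∧ x j < 1 := by
  by_contra h
  push_neg at h
  have hzero : ∀ k, k ≠ i → (if k ∈ V then 1 - x k else x k) = 0 := by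
    intro k hk
    have hint : x k = 0 ∨ x k = 1 := by
      rcases lt_or_ge 0 (x k) with h1 | h1
      · right
        exact le_antisymm (hb k).2 (h k hk h1)
      · left; exact le_antisymm h1 (hb k).1
    rcases hint with h0 | h1
    · have := (tight_side hb hV hi k).2 h0
      simp [this, h0]
    · have := (tight_side hb hV hi k).1 h1
      simp [this, h1]
  have : g x V = (if i ∈ V then 1 - x i else x i) := by
    rw [g_eq_sum]
    exact Finset.sum_eq_single i (fun k _ hk => hzero k hk) (by simp)
  rw [hV] at this
  by_cases hiV : i ∈ V <;> simp [hiV] at this <;> linarith [hi.1, hi.2]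

/-- Any two tight constraints relate a pair of fractional coordinates in the
same way. -/
lemma tight_agree {x : Fin d → ℝ} (hb : ∀ i, 0 ≤ x i ∧ x i ≤ 1)
    {V W : Finset (Fin d)} (hVo : Odd V.card) (hWo : Odd W.card)
    (hV : g x V = 1) (hW : g x W = 1) {i j : Fin d}
    (hi : 0 < x i ∧ x i < 1) (hj : 0 < x j ∧ x j < 1) :
    ((i ∈ V) ↔ (j ∈ V)) ↔ ((i ∈ W) ↔ (j ∈ W)) := by
  set t : Fin d → ℝ := fun k =>
    (if k ∈ V then 1 - x k else x k) + (if k ∈ W then 1 - x k else x k) with ht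
  have htsum : ∑ k, t k = 2 := by
    rw [Finset.sum_add_distrib, ← g_eq_sum, ← g_eq_sum, hV, hW]; norm_num
  have htnn : ∀ k, 0 ≤ t k := fun k =>
    add_nonneg (term_nonneg hb V k) (term_nonneg hb W k)
  set D : Finset (Fin d) := (V \ W) ∪ (W \ V) with hD
  have htD : ∀ k ∈ D, t k = 1 := by
    intro k hk
    rcases Finset.mem_union.1 hk with hk | hk
    · obtain ⟨h1, h2⟩ := Finset.mem_sdiff.1 hk
      simp [ht, h1, h2]
    · obtain ⟨h1, h2⟩ := Finset.mem_sdiff.1 hk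
      simp [ht, h1, h2]
  have hDsum : ∑ k ∈ D, t k = (D.card : ℝ) := by
    rw [Finset.sum_congr rfl htD]; simp
  have hDle : (D.card : ℝ) ≤ 2 := by
    rw [← hDsum, ← htsum]
    exact Finset.sum_le_sum_of_subset_of_nonneg (Finset.subset_univ _)
      fun k _ _ => htnn k
  have hDeven : Even D.card := by
    have hdisj : Disjoint (V \ W) (W \ V) := disjoint_sdiff_sdiff
    have h1 : D.card = (V \ W).card + (W \ V).card := Finset.card_union_of_disjoint hdisj
    have h2 : (V \ W).card + (V ∩ W).card = V.card := Finset.card_sdiff_add_card_inter V W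
    have h3 : (W \ V).card + (W ∩ V).card = W.card := Finset.card_sdiff_add_card_inter W V
    have h4 : (V ∩ W).card = (W ∩ V).card := by rw [Finset.inter_comm]
    rw [Nat.even_iff]
    rw [Nat.odd_iff] at hVo hWo
    omega
  have hfracpos : ∀ k, 0 < x k ∧ x k < 1 → 0 < t k := by
    intro k hk
    rw [ht]
    by_cases h1 : k ∈ V <;> by_cases h2 : k ∈ W <;> simp [h1, h2] <;> linarith [hk.1, hk.2]
  -- both in D or both out of D
  have key : ∀ a b : Fin d, (0 < x b ∧ x b < 1) → a ∈ D → b ∉ D → False := by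
    intro a b hbf haD hbD
    have hD1 : 1 ≤ D.card := Finset.card_pos.2 ⟨a, haD⟩
    have hD2 : 2 ≤ D.card := by
      rw [Nat.even_iff] at hDeven; omega
    have hsum' : ∑ k ∈ insert b D, t k = t b + (D.card : ℝ) := by
      rw [Finset.sum_insert hbD, hDsum]
    have hle : ∑ k ∈ insert b D, t k ≤ 2 := by
      rw [← htsum]
      exact Finset.sum_le_sum_of_subset_of_nonneg (Finset.subset_univ _)
        fun k _ _ => htnn k
    have : (2 : ℝ) ≤ (D.card : ℝ) := by exact_mod_cast hD2
    have := hfracpos b hbf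
    linarith [hsum' ▸ hle]
  have hiD : i ∈ D ↔ j ∈ D := by
    constructor
    · intro h; by_contra h'; exact key i j hj h h'
    · intro h; by_contra h'; exact key j i hi h h'
  simp only [hD, Finset.mem_union, Finset.mem_sdiff] at hiD
  tauto

lemma g_add (x v : Fin d → ℝ) (V : Finset (Fin d)) :
    g (x + v) V = g x V + (∑ k ∈ Vᶜ, v k - ∑ k ∈ V, v k) := by
  unfold g
  simp only [Pi.add_apply]
  rw [show (∑ i ∈ V, (1 - (x i + v i))) = ∑ i ∈ V, ((1 - x i) - v i) from
    Finset.sum_congr rfl fun i _ => by ring]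
  rw [Finset.sum_sub_distrib, Finset.sum_add_distrib]
  ring

lemma g_sub (x v : Fin d → ℝ) (V : Finset (Fin d)) :
    g (x - v) V = g x V - (∑ k ∈ Vᶜ, v k - ∑ k ∈ V, v k) := by
  have := g_add (x - v) v V
  simp only [sub_add_cancel] at this
  linarith

/-- Perturbation staying inside the feasible set. -/
lemma perturb_mem {x : Fin d → ℝ} (hx : x ∈ feas d) (v : Fin d → ℝ)
    (hb : ∀ k, 0 ≤ x k + v k ∧ x k + v k ≤ 1)
    (hb' : ∀ k, 0 ≤ x k - v k ∧ x k - v k ≤ 1)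
    (hcon : ∀ V : Finset (Fin d), Odd V.card →
      |∑ k ∈ Vᶜ, v k - ∑ k ∈ V, v k| ≤ g x V - 1) :
    (x + v) ∈ feas d ∧ (x - v) ∈ feas d := by
  rw [mem_feas_iff] at hx ⊢
  rw [mem_feas_iff (x - v)]
  refine ⟨⟨fun k => by simpa using hb k, fun V hV => ?_⟩,
          ⟨fun k => by simpa using hb' k, fun V hV => ?_⟩⟩
  · rw [g_add]
    have h1 := hcon V hV
    have h2 := abs_le.1 h1
    linarith [h2.1]
  · rw [g_sub]
    have h1 := hcon V hV
    have h2 := abs_le.1 h1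
    linarith [(abs_le.1 h1).2]

lemma exists_pos_le {α : Type*} (T : Finset α) (h : α → ℝ)
    (hpos : ∀ a ∈ T, 0 < h a) : ∃ ε : ℝ, 0 < ε ∧ ∀ a ∈ T, ε ≤ h a := by
  rcases T.eq_empty_or_nonempty with rfl | hne
  · exact ⟨1, one_pos, by simp⟩
  · exact ⟨T.inf' hne h, (Finset.lt_inf'_iff hne).2 hpos,
      fun a ha => Finset.inf'_le h ha⟩

def vertices (d : ℕ) : Set (Fin d → ℝ) :=
  {x : Fin d → ℝ | ∃ c : Fin d → Bool,
    Even (Finset.univ.filter (fun i => c i = true)).card ∧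
    x = fun i => if c i then 1 else 0}

lemma convex_feas : Convex ℝ (feas d) := by
  intro y hy z hz a b ha hb hab
  constructor
  · intro i
    simp only [Pi.add_apply, Pi.smul_apply, smul_eq_mul]
    constructor
    · have := (hy.1 i).1; have := (hz.1 i).1
      positivity
    · nlinarith [(hy.1 i).2, (hz.1 i).2]
  · intro V hV
    have h1 := hy.2 V hV
    have h2 := hz.2 V hV
    have e1 : ∀ A : Finset (Fin d), ∑ i ∈ A, (a • y + b • z) i
        = a * ∑ i ∈ A, y i + b * ∑ i ∈ A, z i := by
      intro A
      simp only [Pi.add_apply, Pi.smul_apply, smul_eq_mul]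
      rw [Finset.sum_add_distrib, Finset.mul_sum, Finset.mul_sum]
    rw [e1, e1]
    nlinarith [h1, h2]

lemma vertices_subset_feas : vertices d ⊆ feas d := by
  rintro x ⟨c, hc, rfl⟩
  constructor
  · intro i
    by_cases h : c i <;> simp [h]
  · intro V hV
    classical
    have hsum : ∀ A : Finset (Fin d), ∑ i ∈ A, (if c i then (1:ℝ) else 0)
        = ((A.filter (fun i => c i = true)).card : ℝ) := by
      intro A
      rw [Finset.sum_boole]
    rw [hsum, hsum]
    set a := (V.filter (fun i => c i = true)).card with hadef
    set b := (Vᶜ.filter (fun i => c i = true)).card with hbdef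
    have haV : a ≤ V.card := Finset.card_le_card (Finset.filter_subset _ _)
    rcases Nat.eq_zero_or_pos b with hb0 | hbpos
    · -- support contained in V; can't have a = V.card since parity differs
      have hfe : Vᶜ.filter (fun i => c i = true) = ∅ := Finset.card_eq_zero.1 hb0
      have hsplit : Finset.univ.filter (fun i => c i = true)
          = V.filter (fun i => c i = true) ∪ Vᶜ.filter (fun i => c i = true) := by
        rw [← Finset.filter_union, Finset.union_compl]
      have ha' : a < V.card := by
        rcases lt_or_eq_of_le haV with h | h
        · exact h
        · exfalso
          have hVf : V.filter (fun i => c i = true) = V :=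
            Finset.eq_of_subset_of_card_le (Finset.filter_subset _ _) (le_of_eq h.symm)
          rw [hsplit, hfe, Finset.union_empty, hVf] at hc
          exact (Nat.not_even_iff_odd.2 hV) hc
      rw [hb0]
      have : (a : ℝ) + 1 ≤ (V.card : ℝ) := by exact_mod_cast ha'
      simp only [Nat.cast_zero, sub_zero]
      linarith
    · have h1 : (1 : ℝ) ≤ (b : ℝ) := by exact_mod_cast hbpos
      have h2 : (a : ℝ) ≤ (V.card : ℝ) := by exact_mod_cast haV
      linarith

lemma isClosed_feas : IsClosed (feas d) := by
  have : feas d = (⋂ i : Fin d, {x : Fin d → ℝ | 0 ≤ x i ∧ x i ≤ 1}) ∩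
      ⋂ V : Finset (Fin d), {x : Fin d → ℝ | Odd V.card →
        (∑ i ∈ V, x i) - (∑ i ∈ Vᶜ, x i) ≤ (V.card : ℝ) - 1} := by
    ext x
    simp only [feas, Set.mem_setOf_eq, Set.mem_inter_iff, Set.mem_iInter]
  rw [this]
  apply IsClosed.inter
  · exact isClosed_iInter fun i => IsClosed.inter
      (isClosed_le continuous_const (continuous_apply i))
      (isClosed_le (continuous_apply i) continuous_const)
  · refine isClosed_iInter fun V => ?_
    by_cases hV : Odd V.card
    · simp only [hV, forall_true_left]
      exact isClosed_le
        (Continuous.sub (continuous_finset_sum _ fun i _ => continuous_apply i)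
          (continuous_finset_sum _ fun i _ => continuous_apply i))
        continuous_const
    · convert isClosed_univ using 1
      ext x; simp [hV]

lemma isCompact_feas : IsCompact (feas d) := by
  have hsub : feas d ⊆ Set.Icc (0 : Fin d → ℝ) 1 := by
    intro x hx
    rw [Set.mem_Icc]
    constructor <;> intro i
    · exact (hx.1 i).1
    · exact (hx.1 i).2
  exact (isCompact_Icc).of_isClosed_subset isClosed_feas hsub

lemma finite_vertices : (vertices d).Finite := by
  have : vertices d ⊆ Set.range (fun c : Fin d → Bool => fun i => if c i then (1:ℝ) else 0) := by
    rintro x ⟨c, _, rfl⟩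
    exact ⟨c, rfl⟩
  exact Set.Finite.subset (Set.finite_range _) this

/-- Extreme points of the feasible set are binary vectors with evenly many
ones. -/
lemma extremePoints_subset_vertices :
    (feas d).extremePoints ℝ ⊆ vertices d := by
  classical
  intro x hx
  obtain ⟨hxS, hext⟩ := mem_extremePoints.1 hx
  obtain ⟨hbnd, hcon⟩ := (mem_feas_iff x).1 hxS
  by_cases hbin : ∀ k, x k = 0 ∨ x k = 1
  · -- binary case: even number of ones
    refine ⟨fun k => if x k = 1 then true else false, ?_, ?_⟩
    · set V : Finset (Fin d) :=
        Finset.univ.filter (fun i => (if x i = 1 then true else false) = true) with hVdef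
      by_contra hodd
      rw [Nat.not_even_iff_odd] at hodd
      have h1 : ∑ i ∈ V, x i = (V.card : ℝ) := by
        have hall : ∀ i ∈ V, x i = 1 := by
          intro i hi
          have h' := (Finset.mem_filter.1 hi).2
          by_cases h : x i = 1
          · exact h
          · simp [h] at h'
        rw [Finset.sum_congr rfl hall]
        simp
      have h2 : ∑ i ∈ Vᶜ, x i = 0 := by
        apply Finset.sum_eq_zero
        intro i hi
        have hni : ¬ ((if x i = 1 then true else false) = true) := by
          have := Finset.mem_compl.1 hi
          simpa [hVdef] using this
        rcases hbin i with h0 | h1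
        · exact h0
        · simp [h1] at hni
      have := hxS.2 V hodd
      rw [h1, h2] at this
      linarith
    · funext k
      rcases hbin k with h0 | h1
      · simp [h0]
      · simp [h1]
  · -- fractional case: contradiction with extremality
    exfalso
    push_neg at hbin
    obtain ⟨i, hi0, hi1⟩ := hbin
    have hifrac : 0 < x i ∧ x i < 1 :=
      ⟨lt_of_le_of_ne (hbnd i).1 (Ne.symm hi0), lt_of_le_of_ne (hbnd i).2 hi1⟩
    -- choose j and s
    obtain ⟨j, s, hjfrac, hs1, htzero⟩ :
        ∃ (j : Fin d) (s : ℝ), (0 < x j ∧ x j < 1) ∧ (|s| ≤ 1 ∧ (j = i → s = 0)) ∧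
          ∀ V : Finset (Fin d), Odd V.card → g x V = 1 →
            ((if i ∈ Vᶜ then (1:ℝ) else 0) - (if i ∈ V then (1:ℝ) else 0))
            + s * ((if j ∈ Vᶜ then (1:ℝ) else 0) - (if j ∈ V then (1:ℝ) else 0)) = 0 := by
      by_cases ht : ∃ V : Finset (Fin d), Odd V.card ∧ g x V = 1
      · obtain ⟨V0, hV0o, hV0t⟩ := ht
        obtain ⟨j, hji, hjfrac⟩ := tight_second_frac hbnd hV0t hifrac
        refine ⟨j, if (i ∈ V0) = (j ∈ V0) then -1 else 1, hjfrac, ⟨?_, fun h => absurd h hji⟩, ?_⟩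
        · split <;> norm_num
        · intro V hVo hVt
          have hag : ((i ∈ V) ↔ (j ∈ V)) ↔ ((i ∈ V0) ↔ (j ∈ V0)) :=
            tight_agree hbnd hVo hV0o hVt hV0t hifrac hjfrac
          by_cases hiV : i ∈ V <;> by_cases hjV : j ∈ V <;>
            by_cases hiV0 : i ∈ V0 <;> by_cases hjV0 : j ∈ V0 <;>
            simp [hiV, hjV, hiV0, hjV0, Finset.mem_compl] at hag ⊢ <;>
            first
              | rfl
              | (exfalso; tauto)
              | norm_num
      · push_neg at ht
        refine ⟨i, 0, hifrac, ⟨by norm_num, fun _ => rfl⟩, ?_⟩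
        intro V hVo hVt
        exact absurd hVt (ht V hVo)
    -- choose epsilon
    set T : Finset (Finset (Fin d)) :=
      Finset.univ.filter (fun V => Odd V.card ∧ g x V ≠ 1) with hT
    obtain ⟨ε₁, hε₁pos, hε₁⟩ := exists_pos_le T (fun V => (g x V - 1) / 2) (by
      intro V hV
      simp only [hT, Finset.mem_filter] at hV
      have := hcon V hV.2.1
      have hne := hV.2.2
      have : 1 < g x V := lt_of_le_of_ne this (Ne.symm hne)
      linarith)
    set ε : ℝ := min ε₁ (min (x i) (min (1 - x i) (min (x j) (1 - x j)))) with hε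
    have hεpos : 0 < ε := by
      apply lt_min hε₁pos
      apply lt_min hifrac.1
      apply lt_min (by linarith [hifrac.2])
      exact lt_min hjfrac.1 (by linarith [hjfrac.2])
    have hεi : ε ≤ x i := le_trans (min_le_right _ _) (min_le_left _ _)
    have hεi' : ε ≤ 1 - x i :=
      le_trans (min_le_right _ _) (le_trans (min_le_right _ _) (min_le_left _ _))
    have hεj : ε ≤ x j :=
      le_trans (min_le_right _ _) (le_trans (min_le_right _ _)
        (le_trans (min_le_right _ _) (min_le_left _ _)))
    have hεj' : ε ≤ 1 - x j :=
      le_trans (min_le_right _ _) (le_trans (min_le_right _ _)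
        (le_trans (min_le_right _ _) (min_le_right _ _)))
    have hεε₁ : ε ≤ ε₁ := min_le_left _ _
    -- the direction
    set u : Fin d → ℝ := fun k => (if k = i then (1:ℝ) else 0) + (if k = j then s else 0)
      with hu
    set v : Fin d → ℝ := fun k => ε * u k with hv
    obtain ⟨hs1, hs0⟩ := hs1
    have hui : u i = 1 := by
      by_cases hji : j = i
      · simp [hu, hji, hs0 hji]
      · simp [hu, Ne.symm hji]
    have huj : |u j| ≤ 1 := by
      by_cases hji : j = i
      · subst hji; rw [hui]; norm_num
      · simp [hu, hji]
        exact hs1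
    have huo : ∀ k, k ≠ i → k ≠ j → u k = 0 := by
      intro k hki hkj
      simp [hu, hki, hkj]
    -- coordinate bounds for x ± v
    have hbounds : ∀ k, (0 ≤ x k + v k ∧ x k + v k ≤ 1) ∧
        (0 ≤ x k - v k ∧ x k - v k ≤ 1) := by
      intro k
      by_cases hki : k = i
      · subst hki
        have : v k = ε := by rw [hv]; simp [hui]
        rw [this]
        refine ⟨⟨by linarith [(hbnd k).1, hεpos.le], by linarith [hεi']⟩,
          ⟨by linarith [hεi], by linarith [(hbnd k).2, hεpos.le]⟩⟩
      · by_cases hkj : k = j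
        · subst hkj
          have habs : |v k| ≤ ε := by
            rw [hv]
            rw [abs_mul, abs_of_nonneg hεpos.le]
            calc ε * |u k| ≤ ε * 1 := by
                  exact mul_le_mul_of_nonneg_left huj hεpos.le
              _ = ε := mul_one ε
          obtain ⟨hv1, hv2⟩ := abs_le.1 habs
          refine ⟨⟨by linarith [hεj], by linarith [hεj']⟩,
            ⟨by linarith [hεj], by linarith [hεj']⟩⟩
        · have h0 := huo k hki hkj
          have : v k = 0 := by simp [hv, h0]
          rw [this]
          simpa using hbnd k
    -- sums of the direction
    have hsumu : ∀ A : Finset (Fin d), ∑ k ∈ A, u k =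
        (if i ∈ A then (1:ℝ) else 0) + (if j ∈ A then s else 0) := by
      intro A
      rw [hu, Finset.sum_add_distrib]
      congr 1
      · simp [Finset.sum_ite_eq']
      · simp [Finset.sum_ite_eq']
    have hsumv : ∀ A : Finset (Fin d), ∑ k ∈ A, v k = ε * ∑ k ∈ A, u k := by
      intro A
      rw [hv, Finset.mul_sum]
    -- constraint control
    have hconV : ∀ V : Finset (Fin d), Odd V.card →
        |∑ k ∈ Vᶜ, v k - ∑ k ∈ V, v k| ≤ g x V - 1 := by
      intro V hVo
      have hD : ∑ k ∈ Vᶜ, v k - ∑ k ∈ V, v k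
          = ε * (((if i ∈ Vᶜ then (1:ℝ) else 0) - (if i ∈ V then (1:ℝ) else 0))
            + s * ((if j ∈ Vᶜ then (1:ℝ) else 0) - (if j ∈ V then (1:ℝ) else 0))) := by
        have hmul : ∀ A : Finset (Fin d), (if j ∈ A then s else 0)
            = s * (if j ∈ A then (1:ℝ) else 0) := fun A => by split <;> ring
        rw [hsumv, hsumv, hsumu, hsumu, hmul, hmul]
        ring
      set σ : ℝ := ((if i ∈ Vᶜ then (1:ℝ) else 0) - (if i ∈ V then (1:ℝ) else 0))
            + s * ((if j ∈ Vᶜ then (1:ℝ) else 0) - (if j ∈ V then (1:ℝ) else 0)) with hσdef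
      have hσ2 : |σ| ≤ 2 := by
        obtain ⟨hsa, hsb⟩ := abs_le.1 hs1
        rw [hσdef, abs_le]
        by_cases h1 : i ∈ V <;> by_cases h2 : j ∈ V <;>
          simp [h1, h2, Finset.mem_compl] <;> constructor <;> nlinarith
      by_cases htV : g x V = 1
      · have : σ = 0 := htzero V hVo htV
        rw [hD, this, mul_zero, abs_zero, htV]
        norm_num
      · have hVT : V ∈ T := by
          simp [hT, hVo, htV]
        have hεV : ε ≤ (g x V - 1) / 2 := le_trans hεε₁ (hε₁ V hVT)
        rw [hD, abs_mul, abs_of_nonneg hεpos.le]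
        calc ε * |σ| ≤ ε * 2 := mul_le_mul_of_nonneg_left hσ2 hεpos.le
          _ ≤ g x V - 1 := by linarith
    obtain ⟨hp, hm⟩ := perturb_mem hxS v (fun k => (hbounds k).1) (fun k => (hbounds k).2) hconV
    have hseg : x ∈ openSegment ℝ (x - v) (x + v) := by
      refine ⟨1/2, 1/2, by norm_num, by norm_num, by norm_num, ?_⟩
      funext k
      simp only [Pi.add_apply, Pi.sub_apply, Pi.smul_apply, smul_eq_mul]
      ring
    have := (hext (x - v) hm (x + v) hp hseg).1
    have hvi : v i = 0 := by
      have := congrFun this i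
      simp only [Pi.sub_apply] at this
      linarith
    rw [hv] at hvi
    simp only [hui, mul_one] at hvi
    exact hεpos.ne' hvi

end FeldmanAux

/-- For `d ≥ 1`, the set of `x ∈ [0,1]^d` satisfying Feldman's
constraints `∑_{i∈V} x_i − ∑_{i∉V} x_i ≤ |V| − 1` for every odd-size
`V ⊆ {1,…,d}` is exactly the parity polytope of degree `d`. -/
theorem feldman_constraints_eq_parityPolytope (d : ℕ) (hd : 1 ≤ d) :
    {x : Fin d → ℝ | (∀ i, 0 ≤ x i ∧ x i ≤ 1) ∧
        ∀ V : Finset (Fin d), Odd V.card →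
          (∑ i ∈ V, x i) - (∑ i ∈ Vᶜ, x i) ≤ (V.card : ℝ) - 1}
      = parityPolytope d := by
  have hpp : parityPolytope d = convexHull ℝ (FeldmanAux.vertices d) := rfl
  show FeldmanAux.feas d = parityPolytope d
  rw [hpp]
  apply Set.Subset.antisymm
  · have hkm := closure_convexHull_extremePoints
      (FeldmanAux.isCompact_feas (d := d)) (FeldmanAux.convex_feas (d := d))
    calc FeldmanAux.feas d
        = closure (convexHull ℝ ((FeldmanAux.feas d).extremePoints ℝ)) := hkm.symm
      _ ⊆ closure (convexHull ℝ (FeldmanAux.vertices d)) :=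
          closure_mono (convexHull_mono FeldmanAux.extremePoints_subset_vertices)
      _ = convexHull ℝ (FeldmanAux.vertices d) :=
          (FeldmanAux.finite_vertices.isClosed_convexHull ℝ).closure_eq
  · exact convexHull_min FeldmanAux.vertices_subset_feas FeldmanAux.convex_feas
end

section
/- For every integer d ≥ 2 and every index k ∈ {1,…,d}, the image of the parity polytope of degree d under the projection that deletes coordinate k equals the full cube [0,1]^{d−1}; that is, for every y ∈ [0,1]^{d−1} there exists t ∈ [0,1] such that the vector obtained from y by inserting t at position k lies in the convex hull of the even-weight vectors of {0,1}^d. -/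
lemma parityPolytope_subset_cube (d : ℕ) :
    parityPolytope d ⊆ {x : Fin d → ℝ | ∀ i, x i ∈ Set.Icc (0 : ℝ) 1} := by
  apply convexHull_min
  · rintro x ⟨c, -, rfl⟩ i
    by_cases h : c i <;> simp [h]
  · have : ({x : Fin d → ℝ | ∀ i, x i ∈ Set.Icc (0 : ℝ) 1})
        = Set.pi Set.univ (fun _ : Fin d => Set.Icc (0 : ℝ) 1) := by
      ext x; simp only [Set.mem_setOf_eq, Set.mem_univ_pi]
    rw [this]
    exact convex_pi fun i _ => convex_Icc 0 1

lemma exists_insertNth_mem (n : ℕ) (k : Fin (n + 1)) (y : Fin n → ℝ)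
    (hy : ∀ i, y i ∈ Set.Icc (0 : ℝ) 1) :
    ∃ t ∈ Set.Icc (0 : ℝ) 1, k.insertNth t y ∈ parityPolytope (n + 1) := by
  -- y is in the convex hull of the binary vectors {0,1}^n
  have hcube : y ∈ convexHull ℝ (Set.pi Set.univ (fun _ : Fin n => ({0, 1} : Set ℝ))) := by
    rw [convexHull_pi]
    intro i _
    rw [convexHull_pair, segment_eq_Icc (by norm_num : (0:ℝ) ≤ 1)]
    exact hy i
  rw [convexHull_eq] at hcube
  obtain ⟨ι, s, w, z, hw₀, hw₁, hz, hy'⟩ := hcube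
  -- Bool vectors corresponding to the vertices
  set b : ι → Fin n → Bool := fun i j => decide (z i j = 1) with hb
  have hzb : ∀ i ∈ s, ∀ j, z i j = if b i j then 1 else 0 := by
    intro i hi j
    have h := hz i hi j (Set.mem_univ j)
    simp only [Set.mem_insert_iff, Set.mem_singleton_iff] at h
    rcases h with h | h <;> simp [hb, h]
  -- extended Bool vectors of even weight
  set B : ι → Fin (n + 1) → Bool := fun i =>
    k.insertNth (decide (Odd (Finset.univ.filter (fun j => b i j = true)).card)) (b i) with hB
  have hBev : ∀ i, Even (Finset.univ.filter (fun j => B i j = true)).card := by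
    intro i
    rw [Finset.card_filter]
    rw [Fin.sum_univ_succAbove (fun j => if B i j = true then 1 else 0) k]
    simp only [hB, Fin.insertNth_apply_same, Fin.insertNth_apply_succAbove]
    rw [← Finset.card_filter]
    set m := (Finset.univ.filter (fun j => b i j = true)).card with hm
    by_cases h : Odd m
    · simpa [h] using (Nat.odd_add_one.mpr (Nat.odd_iff_not_even.mp h)).add_one.symm ▸
        (by simpa [Nat.add_comm] using (Nat.Odd.add_one h))
    · simpa [h] using Nat.not_odd_iff_even.mp h
  set Z : ι → Fin (n + 1) → ℝ := fun i j => if B i j then 1 else 0 with hZ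
  have hZmem : ∀ i ∈ s, Z i ∈ {x : Fin (n+1) → ℝ | ∃ c : Fin (n+1) → Bool,
      Even (Finset.univ.filter (fun j => c j = true)).card ∧
      x = fun j => if c j then 1 else 0} := fun i _ => ⟨B i, hBev i, rfl⟩
  set x : Fin (n + 1) → ℝ := s.centerMass w Z with hx
  have hxmem : x ∈ parityPolytope (n + 1) :=
    Finset.centerMass_mem_convexHull s hw₀ (hw₁ ▸ one_pos) hZmem
  -- x projects to y
  have hproj : ∀ j, x (k.succAbove j) = y j := by
    intro j
    rw [← hy']
    simp only [hx, Finset.centerMass, Pi.smul_apply, Finset.sum_apply, smul_eq_mul]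
    congr 1
    refine Finset.sum_congr rfl fun i hi => ?_
    simp only [hZ, hB, Fin.insertNth_apply_succAbove, hzb i hi j]
  have hxk : x k ∈ Set.Icc (0 : ℝ) 1 := parityPolytope_subset_cube _ hxmem k
  refine ⟨x k, hxk, ?_⟩
  have : k.insertNth (x k) y = x := by
    have hy2 : y = k.removeNth x := funext fun j => (hproj j).symm
    rw [hy2]
    exact Fin.insertNth_self_removeNth k x
  rw [this]
  exact hxmem

/-- For degree `d = n + 1 ≥ 2` and any coordinate `k`, the image
of the parity polytope under the projection deleting coordinate `k` is the full
cube `[0,1]^{d−1}`: for every `y` in the cube there is `t ∈ [0,1]` with the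
vector obtained by inserting `t` at position `k` lying in the parity polytope. -/
theorem parityPolytope_delete_coord_eq_cube (n : ℕ) (hn : 1 ≤ n) (k : Fin (n + 1)) :
    ((fun x : Fin (n + 1) → ℝ => x ∘ k.succAbove) '' parityPolytope (n + 1)
        = {y : Fin n → ℝ | ∀ i, y i ∈ Set.Icc (0 : ℝ) 1}) ∧
      ∀ y : Fin n → ℝ, (∀ i, y i ∈ Set.Icc (0 : ℝ) 1) →
        ∃ t ∈ Set.Icc (0 : ℝ) 1, k.insertNth t y ∈ parityPolytope (n + 1) := by
  constructor
  · ext y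
    constructor
    · rintro ⟨x, hx, rfl⟩ i
      exact parityPolytope_subset_cube _ hx _
    · intro hy
      obtain ⟨t, -, ht⟩ := exists_insertNth_mem n k y hy
      refine ⟨k.insertNth t y, ht, ?_⟩
      funext j
      simp [Fin.insertNth_apply_succAbove]
  · exact fun y hy => exists_insertNth_mem n k y hy
end

section
/- Let m ≥ 1 and N = 2^m. Let B_N be the N × N bit-reversal permutation matrix over the field 𝔽₂ = ZMod 2, i.e., the permutation matrix of the permutation on {0,1,…,N−1} that maps an index to the index whose m-bit binary representation is reversed. Let G₂^{⊗m} be the m-fold Kronecker power of G₂ = [[1,0],[1,1]] over 𝔽₂. Then B_N · G₂^{⊗m} = G₂^{⊗m} · B_N, i.e., the bit-reversal permutation matrix commutes with the polar transform kernel power. -/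
open Matrix

/-- Arıkan's polarization kernel `G₂ = [[1,0],[1,1]]` over `𝔽₂`. -/
def G2 : Matrix (Fin 2) (Fin 2) (ZMod 2) := !![1, 0; 1, 1]

/-- The `m`-fold Kronecker power `G₂^{⊗m}`, a `2^m × 2^m` matrix over `𝔽₂`. -/
def kronPowG2 : (m : ℕ) → Matrix (Fin (2 ^ m)) (Fin (2 ^ m)) (ZMod 2)
  | 0 => 1
  | m + 1 =>
    Matrix.reindex
      (finProdFinEquiv.trans (finCongr (by rw [pow_succ, mul_comm])))
      (finProdFinEquiv.trans (finCongr (by rw [pow_succ, mul_comm])))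
      (Matrix.kronecker G2 (kronPowG2 m))

/-- Reversal of the `m`-bit binary representation of a natural number:
bit `k` of `n` (for `k < m`) becomes bit `m − 1 − k` of the result. -/
def bitRevNat (m n : ℕ) : ℕ :=
  ∑ k ∈ Finset.range m, if n.testBit k then 2 ^ (m - 1 - k) else 0

/-- The `2^m × 2^m` bit-reversal permutation matrix `B_N` over `𝔽₂`: the
permutation matrix of the permutation of `{0,…,2^m − 1}` reversing the `m`-bit
binary representation. -/
def bitRevMatrix (m : ℕ) : Matrix (Fin (2 ^ m)) (Fin (2 ^ m)) (ZMod 2) :=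
  Matrix.of fun i j => if (j : ℕ) = bitRevNat m (i : ℕ) then 1 else 0

/-! ### Auxiliary lemmas -/

/-- The natural number with prescribed bits `b 0, …, b (m-1)`. -/
def ofBits (m : ℕ) (b : ℕ → Bool) : ℕ :=
  ∑ k ∈ Finset.range m, if b k then 2 ^ k else 0

lemma ofBits_lt (m : ℕ) (b : ℕ → Bool) : ofBits m b < 2 ^ m := by
  induction m with
  | zero => simp [ofBits]
  | succ m ih =>
    rw [ofBits, Finset.sum_range_succ]
    have := ih
    rw [ofBits] at this
    have h2 : (if b m then 2 ^ m else 0) ≤ 2 ^ m := by split <;> simp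
    calc _ < 2 ^ m + 2 ^ m := by omega
      _ = 2 ^ (m + 1) := by ring

lemma testBit_ofBits (m : ℕ) (b : ℕ → Bool) (k : ℕ) :
    (ofBits m b).testBit k = (decide (k < m) && b k) := by
  induction m generalizing k with
  | zero => simp [ofBits]
  | succ m ih =>
    have h1 : ofBits (m + 1) b = 2 ^ m * (if b m then 1 else 0) + ofBits m b := by
      rw [ofBits, Finset.sum_range_succ, ofBits, add_comm]
      congr 1
      split <;> simp
    rw [h1, Nat.testBit_two_pow_mul_add _ (ofBits_lt m b) k]
    rcases lt_trichotomy k m with h | h | h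
    · simp [h, ih, Nat.lt_succ_of_lt h]
    · subst h
      simp only [lt_irrefl, if_false, Nat.sub_self]
      cases hb : b k <;> simp [hb]
    · have h0 : ¬ k < m := by omega
      have h2 : ¬ k < m + 1 := by omega
      simp only [h0, if_false, h2]
      have h3 : (if b m then 1 else 0) < 2 ^ (k - m) := by
        have := Nat.one_lt_two_pow_iff.mpr (by omega : k - m ≠ 0)
        split <;> omega
      simp [Nat.testBit_lt_two_pow h3]

lemma bitRevNat_eq_ofBits (m n : ℕ) :
    bitRevNat m n = ofBits m (fun k => n.testBit (m - 1 - k)) := by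
  rw [bitRevNat, ofBits,
    ← Finset.sum_range_reflect (fun j => if n.testBit (m - 1 - j) then 2 ^ j else 0) m]
  apply Finset.sum_congr rfl
  intro k hk
  rw [Finset.mem_range] at hk
  have h : m - 1 - (m - 1 - k) = k := by omega
  rw [h]

lemma bitRevNat_lt (m n : ℕ) : bitRevNat m n < 2 ^ m := by
  rw [bitRevNat_eq_ofBits]; exact ofBits_lt _ _

lemma testBit_bitRevNat (m n k : ℕ) (hk : k < m) :
    (bitRevNat m n).testBit k = n.testBit (m - 1 - k) := by
  rw [bitRevNat_eq_ofBits, testBit_ofBits]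
  simp [hk]

lemma bitRevNat_bitRevNat (m n : ℕ) (hn : n < 2 ^ m) :
    bitRevNat m (bitRevNat m n) = n := by
  apply Nat.eq_of_testBit_eq
  intro k
  by_cases hk : k < m
  · rw [testBit_bitRevNat m _ k hk, testBit_bitRevNat m n _ (by omega)]
    congr 1; omega
  · have h1 : bitRevNat m (bitRevNat m n) < 2 ^ k :=
      lt_of_lt_of_le (bitRevNat_lt m _) (Nat.pow_le_pow_right (by norm_num) (by omega))
    have h2 : n < 2 ^ k :=
      lt_of_lt_of_le hn (Nat.pow_le_pow_right (by norm_num) (by omega))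
    rw [Nat.testBit_lt_two_pow h1, Nat.testBit_lt_two_pow h2]

/-- A bit of a natural number, as an element of `Fin 2`. -/
def bitF (n k : ℕ) : Fin 2 := if n.testBit k then 1 else 0

lemma kronPowG2_succ_apply (m : ℕ) (i j : Fin (2 ^ (m + 1)))
    (hi : (i : ℕ) / 2 ^ m < 2) (hj : (j : ℕ) / 2 ^ m < 2)
    (hi' : (i : ℕ) % 2 ^ m < 2 ^ m) (hj' : (j : ℕ) % 2 ^ m < 2 ^ m) :
    kronPowG2 (m + 1) i j =
      G2 ⟨(i : ℕ) / 2 ^ m, hi⟩ ⟨(j : ℕ) / 2 ^ m, hj⟩ *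
      kronPowG2 m ⟨(i : ℕ) % 2 ^ m, hi'⟩ ⟨(j : ℕ) % 2 ^ m, hj'⟩ := by
  rw [kronPowG2, Matrix.reindex_apply, Matrix.submatrix_apply]
  simp only [Equiv.symm_trans_apply, finCongr_symm, finCongr_apply]
  simp only [show ∀ x : Fin (2 * 2 ^ m), finProdFinEquiv.symm x = (x.divNat, x.modNat)
    from fun _ => rfl]
  rfl

lemma kronPowG2_apply (m : ℕ) (i j : Fin (2 ^ m)) :
    kronPowG2 m i j = ∏ k ∈ Finset.range m, G2 (bitF (i : ℕ) k) (bitF (j : ℕ) k) := by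
  induction m with
  | zero =>
    have hi := i.isLt
    have hj := j.isLt
    have hij : i = j := by
      apply Fin.ext
      simp only [pow_zero] at hi hj
      omega
    subst hij
    simp [kronPowG2, Matrix.one_apply]
  | succ m ih =>
    have hlt : ∀ x : Fin (2 ^ (m + 1)), (x : ℕ) < 2 * 2 ^ m := by
      intro x
      have h1 := x.isLt
      have h2 : (2:ℕ) ^ (m + 1) = 2 * 2 ^ m := by ring
      omega
    have hdiv : ∀ x : Fin (2 ^ (m + 1)), (x : ℕ) / 2 ^ m < 2 := fun x =>
      Nat.div_lt_of_lt_mul (by rw [mul_comm]; exact hlt x)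
    have hmodlt : ∀ x : Fin (2 ^ (m + 1)), (x : ℕ) % 2 ^ m < 2 ^ m := fun x =>
      Nat.mod_lt _ (Nat.two_pow_pos m)
    have hdivbit : ∀ x : Fin (2 ^ (m + 1)),
        (⟨(x : ℕ) / 2 ^ m, hdiv x⟩ : Fin 2) = bitF (x : ℕ) m := by
      intro x
      apply Fin.ext
      have h01 : (x : ℕ) / 2 ^ m = 0 ∨ (x : ℕ) / 2 ^ m = 1 := by
        have h := hdiv x
        revert h
        generalize (x : ℕ) / 2 ^ m = a
        omega
      rcases h01 with h | h <;>
        simp [bitF, Nat.testBit_eq_decide_div_mod_eq, h]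
    have hmodbit : ∀ (x : Fin (2 ^ (m + 1))) (k : ℕ), k ∈ Finset.range m →
        bitF ((x : ℕ) % 2 ^ m) k = bitF (x : ℕ) k := by
      intro x k hk
      rw [Finset.mem_range] at hk
      simp [bitF, Nat.testBit_mod_two_pow, hk]
    rw [Finset.prod_range_succ,
      kronPowG2_succ_apply m i j (hdiv i) (hdiv j) (hmodlt i) (hmodlt j), ih, mul_comm]
    congr 1
    · apply Finset.prod_congr rfl
      intro k hk
      rw [hmodbit i k hk, hmodbit j k hk]
    · rw [hdivbit i, hdivbit j]

lemma kronPowG2_bitRev (m : ℕ) (i j : Fin (2 ^ m)) :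
    kronPowG2 m ⟨bitRevNat m (i : ℕ), bitRevNat_lt m _⟩ j =
      kronPowG2 m i ⟨bitRevNat m (j : ℕ), bitRevNat_lt m _⟩ := by
  rw [kronPowG2_apply, kronPowG2_apply]
  have hL : ∀ k ∈ Finset.range m,
      G2 (bitF (bitRevNat m (i : ℕ)) k) (bitF (j : ℕ) k) =
        G2 (bitF (i : ℕ) (m - 1 - k)) (bitF (j : ℕ) k) := by
    intro k hk
    rw [Finset.mem_range] at hk
    rw [bitF, testBit_bitRevNat m _ k hk, ← bitF]
  rw [Finset.prod_congr rfl hL]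
  calc ∏ k ∈ Finset.range m, G2 (bitF (i : ℕ) (m - 1 - k)) (bitF (j : ℕ) k)
      = ∏ k ∈ Finset.range m,
          G2 (bitF (i : ℕ) (m - 1 - k)) (bitF (j : ℕ) (m - 1 - (m - 1 - k))) := by
        apply Finset.prod_congr rfl
        intro k hk
        rw [Finset.mem_range] at hk
        have h : m - 1 - (m - 1 - k) = k := by omega
        rw [h]
    _ = ∏ k ∈ Finset.range m, G2 (bitF (i : ℕ) k) (bitF (j : ℕ) (m - 1 - k)) :=
        Finset.prod_range_reflect (fun k => G2 (bitF (i : ℕ) k) (bitF (j : ℕ) (m - 1 - k))) m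
    _ = ∏ k ∈ Finset.range m,
          G2 (bitF (i : ℕ) k) (bitF ((⟨bitRevNat m (j : ℕ), bitRevNat_lt m _⟩ :
            Fin (2 ^ m)) : ℕ) k) := by
        apply Finset.prod_congr rfl
        intro k hk
        rw [Finset.mem_range] at hk
        simp only [bitF]
        rw [testBit_bitRevNat m _ k hk]

/-- For `m ≥ 1` and `N = 2^m`, the bit-reversal permutation
matrix commutes with the polar transform kernel power:
`B_N · G₂^{⊗m} = G₂^{⊗m} · B_N`. -/
theorem bitRevMatrix_commute_kronPowG2 (m : ℕ) (hm : 1 ≤ m) :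
    bitRevMatrix m * kronPowG2 m = kronPowG2 m * bitRevMatrix m := by
  ext i j
  rw [Matrix.mul_apply, Matrix.mul_apply]
  have hL : ∀ l : Fin (2 ^ m),
      bitRevMatrix m i l * kronPowG2 m l j =
        if l = (⟨bitRevNat m (i : ℕ), bitRevNat_lt m _⟩ : Fin (2 ^ m)) then
          kronPowG2 m l j else 0 := by
    intro l
    rw [bitRevMatrix]
    simp only [Matrix.of_apply, Fin.ext_iff]
    split <;> simp
  have hR : ∀ l : Fin (2 ^ m),
      kronPowG2 m i l * bitRevMatrix m l j =
        if l = (⟨bitRevNat m (j : ℕ), bitRevNat_lt m _⟩ : Fin (2 ^ m)) then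
          kronPowG2 m i l else 0 := by
    intro l
    rw [bitRevMatrix]
    simp only [Matrix.of_apply, Fin.ext_iff]
    have hiff : ((j : ℕ) = bitRevNat m (l : ℕ)) ↔ ((l : ℕ) = bitRevNat m (j : ℕ)) := by
      constructor
      · intro h
        rw [h, bitRevNat_bitRevNat m _ l.isLt]
      · intro h
        rw [h, bitRevNat_bitRevNat m _ j.isLt]
    rcases Classical.em ((l : ℕ) = bitRevNat m (j : ℕ)) with h | h
    · rw [if_pos (hiff.mpr h), if_pos h, mul_one]
    · rw [if_neg (fun hc => h (hiff.mp hc)), if_neg h, mul_zero]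
  rw [Finset.sum_congr rfl (fun l _ => hL l), Finset.sum_congr rfl (fun l _ => hR l),
    Finset.sum_ite_eq' _ _ _, Finset.sum_ite_eq' _ _ _]
  simp only [Finset.mem_univ, if_true]
  exact kronPowG2_bitRev m i j
end

section
/- Let γ ∈ ℝ^N and let B = {x ∈ ℝ^N : x_i ≥ 0 whenever γ_i ≥ 0, and x_i ≤ 1 whenever γ_i < 0} be the feasible region of the initial LP of the adaptive LP decoder. Define the hard-decision vector x* by x*_i = 0 if γ_i ≥ 0 and x*_i = 1 if γ_i < 0. Then x* ∈ B and γᵀx* ≤ γᵀx for every x ∈ B, i.e., x* is an optimal solution of the initial LP (minimize γᵀx subject to x ∈ B); moreover, if γ_i ≠ 0 for every i, then x* is the unique minimizer. Thus the solution of the initial LP coincides with the output of hard-decision decoding of the received LLR values. -/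
/-- The hard-decision vector `x*` (with `x*_i = 0` if `γ_i ≥ 0`
and `x*_i = 1` if `γ_i < 0`) is an optimal solution of the initial LP of the
adaptive LP decoder — minimize `γᵀx` subject to `x_i ≥ 0` when `γ_i ≥ 0` and
`x_i ≤ 1` when `γ_i < 0` — and it is the unique minimizer whenever `γ_i ≠ 0`
for all `i`. -/
theorem initial_lp_solution_is_hard_decision (N : ℕ) (γ : Fin N → ℝ)
    (B : Set (Fin N → ℝ))
    (hB : B = {x | ∀ i, (0 ≤ γ i → 0 ≤ x i) ∧ (γ i < 0 → x i ≤ 1)})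
    (xstar : Fin N → ℝ) (hxstar : ∀ i, xstar i = if 0 ≤ γ i then 0 else 1) :
    xstar ∈ B ∧
      (∀ x ∈ B, (∑ i, γ i * xstar i) ≤ ∑ i, γ i * x i) ∧
      ((∀ i, γ i ≠ 0) →
        ∀ x ∈ B, (∑ i, γ i * x i) ≤ (∑ i, γ i * xstar i) → x = xstar) := by
  subst hB
  have hterm : ∀ x ∈ ({x | ∀ i, (0 ≤ γ i → 0 ≤ x i) ∧ (γ i < 0 → x i ≤ 1)} :
      Set (Fin N → ℝ)), ∀ i, γ i * xstar i ≤ γ i * x i := by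
    intro x hx i
    rw [hxstar i]
    by_cases h : 0 ≤ γ i
    · simp only [if_pos h, mul_zero]
      exact mul_nonneg h ((hx i).1 h)
    · push_neg at h
      simp only [if_neg (not_le.mpr h), mul_one]
      have := (hx i).2 h
      nlinarith
  refine ⟨?_, ?_, ?_⟩
  · intro i
    rw [hxstar i]
    constructor
    · intro h; simp [if_pos h]
    · intro h; simp [if_neg (not_le.mpr h)]
  · intro x hx
    exact Finset.sum_le_sum fun i _ => hterm x hx i
  · intro hne x hx hle
    have heq : ∑ i, γ i * x i = ∑ i, γ i * xstar i :=
      le_antisymm hle (Finset.sum_le_sum fun i _ => hterm x hx i)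
    have hall : ∀ i ∈ Finset.univ, γ i * xstar i = γ i * x i := by
      apply (Finset.sum_eq_sum_iff_of_le (fun i _ => hterm x hx i)).mp heq.symm
    funext i
    have := hall i (Finset.mem_univ i)
    exact (mul_left_cancel₀ (hne i) this.symm)
end
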